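/- There is an absolute constant C such that for all integers l ≥ 1 and g ≥ 3 there exist a finite group 𝒢 and a generating set S of 𝒢 with |S| ≥ l and |𝒢| ≤ (C·(l+1))^{C·g}, such that the Cayley graph of (𝒢, S) has girth at least g. -/

import Mathlib

open SimpleGraph


/-- The Cayley graph of a group `𝒢` with respect to a set `S ⊆ 𝒢`: distinct `g₁` and `g₂` are
adjacent iff `g₁ * s = g₂` or `g₁ * s⁻¹ = g₂` for some `s ∈ S`. -/
def cayleyGraph {𝒢 : Type*} [Group 𝒢] (S : Set 𝒢) : SimpleGraph 𝒢 where
  Adj g₁ g₂ := g₁ ≠ g₂ ∧ ∃ s ∈ S, g₁ * s = g₂ ∨ g₁ * s⁻¹ = g₂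
  symm := by
    constructor
    rintro a b ⟨hne, s, hs, h | h⟩
    · exact ⟨hne.symm, s, hs, Or.inr (by rw [← h, mul_inv_cancel_right])⟩
    · exact ⟨hne.symm, s, hs, Or.inl (by rw [← h, inv_mul_cancel_right])⟩
  loopless := by constructor; rintro a ⟨hne, -⟩; exact hne rfl

namespace HighGirthCayley

open Pointwise

abbrev SL2Z := Matrix.SpecialLinearGroup (Fin 2) ℤ

/-- The generator `AⁱBA⁻ⁱ` where `A = [[1,2],[0,1]]`, `B = [[1,0],[2,1]]`. -/
def gen (i : ℕ) : SL2Z :=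
  ⟨!![1 + 4*(i:ℤ), -8*(i:ℤ)^2; 2, 1 - 4*(i:ℤ)], by
    rw [Matrix.det_fin_two_of]; ring⟩

def genInv (i : ℕ) : SL2Z :=
  ⟨!![1 - 4*(i:ℤ), 8*(i:ℤ)^2; -2, 1 + 4*(i:ℤ)], by
    rw [Matrix.det_fin_two_of]; ring⟩

lemma gen_inv_eq (i : ℕ) : (gen i)⁻¹ = genInv i := by
  apply inv_eq_of_mul_eq_one_right
  apply Subtype.ext
  show ((gen i : Matrix (Fin 2) (Fin 2) ℤ) * (genInv i : Matrix (Fin 2) (Fin 2) ℤ)) = 1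
  simp only [gen, genInv]
  ext j k
  fin_cases j <;> fin_cases k <;>
    simp [Matrix.mul_apply, Fin.sum_univ_two, Matrix.one_apply] <;> ring

/-- Nonzero integer vectors, the ping-pong table. -/
def V : Type := {v : Fin 2 → ℤ // v ≠ 0}

instance : SMul SL2Z V :=
  ⟨fun g v => ⟨(g : Matrix (Fin 2) (Fin 2) ℤ).mulVec v.1, by
    intro h
    apply v.2
    have h1 : ((g⁻¹ : SL2Z) : Matrix (Fin 2) (Fin 2) ℤ) * (g : Matrix (Fin 2) (Fin 2) ℤ) = 1 := by
      rw [← Matrix.SpecialLinearGroup.coe_mul, inv_mul_cancel,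
        Matrix.SpecialLinearGroup.coe_one]
    calc v.1 = (1 : Matrix (Fin 2) (Fin 2) ℤ).mulVec v.1 := (Matrix.one_mulVec v.1).symm
      _ = ((g⁻¹ : SL2Z) : Matrix (Fin 2) (Fin 2) ℤ).mulVec
            ((g : Matrix (Fin 2) (Fin 2) ℤ).mulVec v.1) := by
          rw [Matrix.mulVec_mulVec, h1]
      _ = 0 := by rw [h, Matrix.mulVec_zero]⟩⟩

lemma smul_coe (g : SL2Z) (v : V) :
    (g • v).1 = (g : Matrix (Fin 2) (Fin 2) ℤ).mulVec v.1 := rfl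

instance : MulAction SL2Z V where
  one_smul v := by
    apply Subtype.ext
    rw [smul_coe, Matrix.SpecialLinearGroup.coe_one, Matrix.one_mulVec]
  mul_smul g h v := by
    apply Subtype.ext
    rw [smul_coe, smul_coe, smul_coe, Matrix.mulVec_mulVec,
      Matrix.SpecialLinearGroup.coe_mul]

/-- `d i v = x - 2iy`, invariant of `gen i`. -/
def dd (i : ℕ) (v : V) : ℤ := v.1 0 - 2*(i:ℤ)*(v.1 1)

def XX (i : ℕ) : Set V := {v | (dd i v)^2 ≤ (v.1 1) * dd i v}
def YY (i : ℕ) : Set V := {v | (v.1 1) * dd i v < -((dd i v)^2)}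

lemma mulVec_apply (g : SL2Z) (v : V) (j : Fin 2) :
    (g • v).1 j = (g : Matrix (Fin 2) (Fin 2) ℤ) j 0 * v.1 0
      + (g : Matrix (Fin 2) (Fin 2) ℤ) j 1 * v.1 1 := by
  rw [smul_coe]
  simp [Matrix.mulVec, dotProduct, Fin.sum_univ_two]

lemma gen_entry (i : ℕ) :
    (gen i : Matrix (Fin 2) (Fin 2) ℤ) = !![1 + 4*(i:ℤ), -8*(i:ℤ)^2; 2, 1 - 4*(i:ℤ)] := rfl

lemma genInv_entry (i : ℕ) :
    ((gen i)⁻¹ : SL2Z) = genInv i := gen_inv_eq i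

lemma y_gen_smul (i : ℕ) (v : V) : (gen i • v).1 1 = v.1 1 + 2 * dd i v := by
  rw [mulVec_apply, gen_entry, dd]
  simp [Matrix.cons_val_zero, Matrix.cons_val_one]
  ring

lemma d_gen_smul (i : ℕ) (v : V) : dd i (gen i • v) = dd i v := by
  rw [dd, mulVec_apply, mulVec_apply, gen_entry, dd]
  simp [Matrix.cons_val_zero, Matrix.cons_val_one]
  ring

lemma y_genInv_smul (i : ℕ) (v : V) : ((gen i)⁻¹ • v).1 1 = v.1 1 - 2 * dd i v := by
  rw [genInv_entry, mulVec_apply, dd, genInv]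
  simp [Matrix.cons_val_zero, Matrix.cons_val_one]
  ring

lemma d_genInv_smul (i : ℕ) (v : V) : dd i ((gen i)⁻¹ • v) = dd i v := by
  rw [genInv_entry, dd, mulVec_apply, mulVec_apply, dd, genInv]
  simp [Matrix.cons_val_zero, Matrix.cons_val_one]
  ring

lemma y_ne_zero_of_mem_XX {i : ℕ} {v : V} (hv : v ∈ XX i) : v.1 1 ≠ 0 := by
  intro hy
  apply v.2
  have hd : dd i v = v.1 0 := by rw [dd, hy]; ring
  have h : (v.1 0)^2 ≤ 0 := by
    have := hv
    rw [XX, Set.mem_setOf_eq, hd, hy] at this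
    nlinarith
  have hx : v.1 0 = 0 := by nlinarith [sq_nonneg (v.1 0)]
  funext j
  fin_cases j
  · exact hx
  · exact hy

lemma mem_XX_bounds {i : ℕ} {v : V} (hv : v ∈ XX i) :
    0 ≤ v.1 1 * dd i v ∧ v.1 1 * dd i v ≤ (v.1 1)^2 := by
  have hy := y_ne_zero_of_mem_XX hv
  have hy2 : 0 < (v.1 1)^2 := by positivity
  rw [XX, Set.mem_setOf_eq] at hv
  constructor
  · nlinarith [sq_nonneg (dd i v)]
  · nlinarith [sq_nonneg (v.1 1 * dd i v), sq_nonneg (v.1 1 - dd i v), sq_nonneg (v.1 1 + dd i v)]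

lemma y_ne_zero_of_mem_YY {i : ℕ} {v : V} (hv : v ∈ YY i) : v.1 1 ≠ 0 := by
  intro hy
  rw [YY, Set.mem_setOf_eq, hy] at hv
  nlinarith [sq_nonneg (dd i v)]

lemma mem_YY_bounds {i : ℕ} {v : V} (hv : v ∈ YY i) :
    -((v.1 1)^2) < v.1 1 * dd i v ∧ v.1 1 * dd i v < 0 := by
  have hy := y_ne_zero_of_mem_YY hv
  have hy2 : 0 < (v.1 1)^2 := by positivity
  rw [YY, Set.mem_setOf_eq] at hv
  constructor
  · nlinarith [sq_nonneg (v.1 1 * dd i v), sq_nonneg (v.1 1 - dd i v), sq_nonneg (v.1 1 + dd i v)]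
  · nlinarith [sq_nonneg (dd i v)]

lemma d_sub (i j : ℕ) (v : V) : dd i v - dd j v = 2*((j:ℤ) - (i:ℤ))*(v.1 1) := by
  rw [dd, dd]; ring

lemma XX_disj {i j : ℕ} (hij : i ≠ j) : Disjoint (XX i) (XX j) := by
  rw [Set.disjoint_left]
  intro v hvi hvj
  have h1 := mem_XX_bounds hvi
  have h2 := mem_XX_bounds hvj
  have hy2 : 0 < (v.1 1)^2 := by
    have := y_ne_zero_of_mem_XX hvi; positivity
  have hsub : v.1 1 * dd i v - v.1 1 * dd j v = 2*((j:ℤ) - (i:ℤ))*(v.1 1)^2 := by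
    rw [dd, dd]; ring
  rcases Nat.lt_or_ge i j with h | h
  · have : (1:ℤ) ≤ (j:ℤ) - (i:ℤ) := by omega
    nlinarith
  · have hlt : j < i := lt_of_le_of_ne h (Ne.symm hij)
    have : (1:ℤ) ≤ (i:ℤ) - (j:ℤ) := by omega
    nlinarith

lemma YY_disj {i j : ℕ} (hij : i ≠ j) : Disjoint (YY i) (YY j) := by
  rw [Set.disjoint_left]
  intro v hvi hvj
  have h1 := mem_YY_bounds hvi
  have h2 := mem_YY_bounds hvj
  have hy2 : 0 < (v.1 1)^2 := by
    have := y_ne_zero_of_mem_YY hvi; positivity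
  have hsub : v.1 1 * dd i v - v.1 1 * dd j v = 2*((j:ℤ) - (i:ℤ))*(v.1 1)^2 := by
    rw [dd, dd]; ring
  rcases Nat.lt_or_ge i j with h | h
  · have : (1:ℤ) ≤ (j:ℤ) - (i:ℤ) := by omega
    nlinarith
  · have hlt : j < i := lt_of_le_of_ne h (Ne.symm hij)
    have : (1:ℤ) ≤ (i:ℤ) - (j:ℤ) := by omega
    nlinarith

lemma XY_disj (i j : ℕ) : Disjoint (XX i) (YY j) := by
  rw [Set.disjoint_left]
  intro v hvi hvj
  have h1 := mem_XX_bounds hvi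
  have h2 := mem_YY_bounds hvj
  have hy2 : 0 < (v.1 1)^2 := by
    have := y_ne_zero_of_mem_XX hvi; positivity
  have hsub : v.1 1 * dd i v - v.1 1 * dd j v = 2*((j:ℤ) - (i:ℤ))*(v.1 1)^2 := by
    rw [dd, dd]; ring
  rcases Nat.lt_or_ge i j with h | h
  · have : (1:ℤ) ≤ (j:ℤ) - (i:ℤ) := by omega
    nlinarith
  · rcases Nat.lt_or_ge j i with h' | h'
    · have : (1:ℤ) ≤ (i:ℤ) - (j:ℤ) := by omega
      nlinarith
    · have hji : j = i := by omega
      subst hji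
      nlinarith

lemma XX_nonempty (i : ℕ) : (XX i).Nonempty := by
  refine ⟨⟨![2*(i:ℤ), 1], ?_⟩, ?_⟩
  · intro h
    have := congrFun h 1
    simp at this
  · show (dd i _)^2 ≤ _ * dd i _
    have hd : dd i ⟨![2*(i:ℤ), 1], by intro h; have := congrFun h 1; simp at this⟩ = 0 := by
      unfold dd; simp
    rw [hd]; simp

lemma gen_maps (i : ℕ) : gen i • (YY i)ᶜ ⊆ XX i := by
  rintro w ⟨v, hv, rfl⟩
  rw [Set.mem_compl_iff, YY, Set.mem_setOf_eq, not_lt] at hv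
  show (dd i (gen i • v))^2 ≤ (gen i • v).1 1 * dd i (gen i • v)
  rw [d_gen_smul, y_gen_smul]
  nlinarith

lemma genInv_maps (i : ℕ) : (gen i)⁻¹ • (XX i)ᶜ ⊆ YY i := by
  rintro w ⟨v, hv, rfl⟩
  rw [Set.mem_compl_iff, XX, Set.mem_setOf_eq, not_le] at hv
  show ((gen i)⁻¹ • v).1 1 * dd i ((gen i)⁻¹ • v) < -((dd i ((gen i)⁻¹ • v))^2)
  rw [d_genInv_smul, y_genInv_smul]
  nlinarith

theorem gen_free (M : ℕ) (hM : 2 ≤ M) :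
    Function.Injective (FreeGroup.lift (fun i : Fin M => gen (i : ℕ))) := by
  haveI : Nontrivial (Fin M) := by
    refine ⟨⟨0, by omega⟩, ⟨1, by omega⟩, ?_⟩
    intro h
    have := congrArg Fin.val h
    simp at this
  apply FreeGroup.injective_lift_of_ping_pong (fun i : Fin M => gen (i : ℕ))
    (fun i : Fin M => XX (i : ℕ)) (fun i : Fin M => YY (i : ℕ))
  · intro i; exact XX_nonempty _
  · intro i j hij
    exact XX_disj (fun h => hij (Fin.val_injective h))
  · intro i j hij
    exact YY_disj (fun h => hij (Fin.val_injective h))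
  · intro i j; exact XY_disj _ _
  · intro i; exact gen_maps _
  · intro i; exact genInv_maps _

/-! ### Entry bounds -/

def MatBd (A : Matrix (Fin 2) (Fin 2) ℤ) (c : ℤ) : Prop := ∀ i j, |A i j| ≤ c

lemma matBd_mul {A B : Matrix (Fin 2) (Fin 2) ℤ} {a b : ℤ} (hA : MatBd A a) (hB : MatBd B b)
    (ha : 0 ≤ a) : MatBd (A * B) (2*a*b) := by
  intro i j
  rw [Matrix.mul_apply, Fin.sum_univ_two]
  calc |A i 0 * B 0 j + A i 1 * B 1 j| ≤ |A i 0 * B 0 j| + |A i 1 * B 1 j| := abs_add_le _ _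
    _ = |A i 0| * |B 0 j| + |A i 1| * |B 1 j| := by rw [abs_mul, abs_mul]
    _ ≤ a * b + a * b :=
        add_le_add (mul_le_mul (hA i 0) (hB 0 j) (abs_nonneg _) ha)
          (mul_le_mul (hA i 1) (hB 1 j) (abs_nonneg _) ha)
    _ = 2*a*b := by ring

lemma matBd_gen {M i : ℕ} (hi : i < M) (hM : 1 ≤ M) :
    MatBd (gen i : Matrix (Fin 2) (Fin 2) ℤ) (8*(M:ℤ)^2) := by
  have hi' : (i:ℤ) < (M:ℤ) := by exact_mod_cast hi
  have hi0 : (0:ℤ) ≤ (i:ℤ) := Int.natCast_nonneg i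
  have hM' : (1:ℤ) ≤ (M:ℤ) := by exact_mod_cast hM
  intro j k
  rw [gen_entry]
  fin_cases j <;> fin_cases k <;> simp [abs_le] <;>
    first
    | (constructor <;> nlinarith)
    | nlinarith

lemma matBd_genInv {M i : ℕ} (hi : i < M) (hM : 1 ≤ M) :
    MatBd ((gen i)⁻¹ : SL2Z) (8*(M:ℤ)^2) := by
  have hi' : (i:ℤ) < (M:ℤ) := by exact_mod_cast hi
  have hi0 : (0:ℤ) ≤ (i:ℤ) := Int.natCast_nonneg i
  have hM' : (1:ℤ) ≤ (M:ℤ) := by exact_mod_cast hM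
  intro j k
  rw [genInv_entry]
  show |(genInv i : Matrix (Fin 2) (Fin 2) ℤ) j k| ≤ _
  rw [genInv]
  fin_cases j <;> fin_cases k <;> simp [abs_le] <;>
    first
    | (constructor <;> nlinarith)
    | nlinarith

lemma matBd_prod {M : ℕ} (hM : 1 ≤ M) (L : List (Fin M × Bool)) :
    MatBd (((L.map fun x => bif x.2 then gen (x.1 : ℕ) else (gen (x.1 : ℕ))⁻¹).prod : SL2Z) :
      Matrix (Fin 2) (Fin 2) ℤ) ((16*(M:ℤ)^2)^L.length) := by
  induction L with
  | nil =>
    intro i j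
    simp only [List.map_nil, List.prod_nil, List.length_nil, pow_zero]
    rw [Matrix.SpecialLinearGroup.coe_one]
    by_cases h : i = j <;> simp [Matrix.one_apply, h]
  | cons x L ih =>
    have hbd : MatBd ((bif x.2 then gen (x.1 : ℕ) else (gen (x.1 : ℕ))⁻¹ : SL2Z) :
        Matrix (Fin 2) (Fin 2) ℤ) (8*(M:ℤ)^2) := by
      cases x.2
      · simpa using matBd_genInv x.1.2 hM
      · simpa using matBd_gen x.1.2 hM
    have := matBd_mul hbd (ih) (by positivity)
    intro i j
    have h2 : ((16*(M:ℤ)^2)^(x::L).length) = 2*(8*(M:ℤ)^2)*(16*(M:ℤ)^2)^L.length := by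
      rw [List.length_cons, pow_succ]
      ring
    rw [h2]
    simpa only [List.map_cons, List.prod_cons, Matrix.SpecialLinearGroup.coe_mul] using this i j

/-! ### Reduced words -/

lemma reduce_eq_self {α : Type*} [DecidableEq α] (L : List (α × Bool))
    (h : List.Chain' (fun x y => ¬(x.1 = y.1 ∧ x.2 = !y.2)) L) : FreeGroup.reduce L = L := by
  induction L with
  | nil => rfl
  | cons x L ih =>
    have htail : FreeGroup.reduce L = L := ih h.tail
    rw [FreeGroup.reduce.cons, htail]
    cases L with
    | nil => rfl
    | cons y t =>
      have hxy : ¬(x.1 = y.1 ∧ x.2 = !y.2) := List.isChain_cons_cons.mp h |>.1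
      simp only [hxy, if_false]

lemma mk_ne_one {α : Type*} [DecidableEq α] (L : List (α × Bool)) (hL : L ≠ [])
    (h : List.Chain' (fun x y => ¬(x.1 = y.1 ∧ x.2 = !y.2)) L) : FreeGroup.mk L ≠ 1 := by
  intro hcon
  apply hL
  have := congrArg FreeGroup.toWord hcon
  rw [FreeGroup.toWord_mk, FreeGroup.toWord_one, reduce_eq_self L h] at this
  exact this

/-! ### The key arithmetic lemma: no short nontrivial relation mod p -/

theorem no_short_relation (M : ℕ) (hM : 2 ≤ M) (g : ℕ) (p : ℕ)
    (hp : ((16*(M:ℤ)^2)^(g-1) + 1 : ℤ) < (p:ℤ))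
    (L : List (Fin M × Bool)) (hL : L ≠ [])
    (hchain : List.Chain' (fun x y => ¬(x.1 = y.1 ∧ x.2 = !y.2)) L)
    (hlen : L.length ≤ g - 1) :
    (L.map fun x => bif x.2 then
        Matrix.SpecialLinearGroup.map (Int.castRingHom (ZMod p)) (gen (x.1 : ℕ))
      else (Matrix.SpecialLinearGroup.map (Int.castRingHom (ZMod p)) (gen (x.1 : ℕ)))⁻¹).prod
      ≠ 1 := by
  intro hcon
  set φ := Matrix.SpecialLinearGroup.map (n := Fin 2) (Int.castRingHom (ZMod p))
  set W : SL2Z := (L.map fun x => bif x.2 then gen (x.1 : ℕ) else (gen (x.1 : ℕ))⁻¹).prod with hW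
  -- W ≠ 1 via ping-pong freeness
  have hWne : W ≠ 1 := by
    have hfree := gen_free M hM
    have h1 : FreeGroup.lift (fun i : Fin M => gen (i : ℕ)) (FreeGroup.mk L) = W :=
      FreeGroup.lift_mk
    have h2 : FreeGroup.mk L ≠ 1 := mk_ne_one L hL hchain
    intro hcon'
    apply h2
    apply hfree
    rw [h1, hcon', map_one]
  -- φ W = 1
  have hφW : φ W = 1 := by
    rw [hW, map_list_prod, List.map_map]
    rw [← hcon]
    congr 1
    apply List.map_congr_left
    intro x _
    cases hx : x.2 <;> simp [hx, map_inv]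
  -- entries of W are ≡ those of 1 mod p and small, so W = 1
  apply hWne
  apply Subtype.ext
  rw [Matrix.SpecialLinearGroup.coe_one]
  have hbd : MatBd (W : Matrix (Fin 2) (Fin 2) ℤ) ((16*(M:ℤ)^2)^L.length) := matBd_prod (by omega) L
  have hbase : (1:ℤ) ≤ 16*(M:ℤ)^2 := by
    have : (1:ℤ) ≤ (M:ℤ) := by exact_mod_cast (by omega : 1 ≤ M)
    nlinarith
  have hbd' : ∀ i j, |(W : Matrix (Fin 2) (Fin 2) ℤ) i j| ≤ (16*(M:ℤ)^2)^(g-1) := by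
    intro i j
    exact (hbd i j).trans (pow_le_pow_right₀ hbase hlen)
  ext i j
  have hdvd : (p:ℤ) ∣ ((W : Matrix (Fin 2) (Fin 2) ℤ) i j
      - (1 : Matrix (Fin 2) (Fin 2) ℤ) i j) := by
    rw [← ZMod.intCast_zmod_eq_zero_iff_dvd]
    push_cast
    have : ((W : Matrix (Fin 2) (Fin 2) ℤ) i j : ZMod p)
        = ((φ W : Matrix (Fin 2) (Fin 2) (ZMod p))) i j := by
      simp [φ, Matrix.SpecialLinearGroup.map, Matrix.map_apply]
      rfl
    rw [this, hφW]
    by_cases h : i = j <;> simp [Matrix.one_apply, h]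
  have hsmall : |(W : Matrix (Fin 2) (Fin 2) ℤ) i j - (1 : Matrix (Fin 2) (Fin 2) ℤ) i j|
      < (p:ℤ) := by
    have h1 : |(1 : Matrix (Fin 2) (Fin 2) ℤ) i j| ≤ 1 := by
      by_cases h : i = j <;> simp [Matrix.one_apply, h]
    calc |(W : Matrix (Fin 2) (Fin 2) ℤ) i j - (1 : Matrix (Fin 2) (Fin 2) ℤ) i j|
        ≤ |(W : Matrix (Fin 2) (Fin 2) ℤ) i j| + |(1 : Matrix (Fin 2) (Fin 2) ℤ) i j| :=
          abs_sub _ _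
      _ ≤ (16*(M:ℤ)^2)^(g-1) + 1 := by gcongr; exact hbd' i j
      _ < (p:ℤ) := hp
  have : (W : Matrix (Fin 2) (Fin 2) ℤ) i j - (1 : Matrix (Fin 2) (Fin 2) ℤ) i j = 0 := by
    by_contra hne
    have := Int.le_of_dvd (abs_pos.mpr hne) ((dvd_abs _ _).mpr hdvd)
    omega
  linarith [this]

/-! ### Walks: extraction of reduced words from cycles -/

lemma getVert_eq_support_getElem {Vt : Type*} {G : SimpleGraph Vt} {u v : Vt}
    (p : G.Walk u v) (n : ℕ) (hn : n ≤ p.length) :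
    p.getVert n = p.support[n]'(by rw [SimpleGraph.Walk.length_support]; omega) := by
  induction p generalizing n with
  | nil =>
    have hn0 : n = 0 := by simpa using hn
    subst hn0
    simp [SimpleGraph.Walk.support_nil]
  | cons h q ih =>
    cases n with
    | zero => simp [SimpleGraph.Walk.support_cons]
    | succ m =>
      rw [SimpleGraph.Walk.getVert_cons_succ]
      simp only [SimpleGraph.Walk.support_cons, List.getElem_cons_succ]
      exact ih m (by simpa using hn)

lemma cycle_getVert_ne {Vt : Type*} {G : SimpleGraph Vt} {u : Vt} {w : G.Walk u u}
    (hw : w.IsCycle) {i j : ℕ} (h1 : 1 ≤ i) (hij : i < j) (hj : j ≤ w.length) :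
    w.getVert i ≠ w.getVert j := by
  intro hcon
  rw [getVert_eq_support_getElem w i (by omega), getVert_eq_support_getElem w j hj] at hcon
  have hnodup : w.support.tail.Nodup := hw.support_nodup
  have hlen : w.support.length = w.length + 1 := SimpleGraph.Walk.length_support w
  have htlen : w.support.tail.length = w.length := by
    rw [List.length_tail, hlen]
    omega
  obtain ⟨i', rfl⟩ : ∃ i', i = i' + 1 := ⟨i - 1, by omega⟩
  obtain ⟨j', rfl⟩ : ∃ j', j = j' + 1 := ⟨j - 1, by omega⟩
  have h1 : w.support.tail.get ⟨i', by omega⟩ = w.support.get ⟨i'+1, by omega⟩ :=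
    List.get_tail _ _ _ _
  have h2 : w.support.tail.get ⟨j', by omega⟩ = w.support.get ⟨j'+1, by omega⟩ :=
    List.get_tail _ _ _ _
  have heq : w.support.tail.get ⟨i', by omega⟩ = w.support.tail.get ⟨j', by omega⟩ := by
    rw [h1, h2]
    simpa [List.get_eq_getElem] using hcon
  have := (hnodup.get_inj_iff).mp heq
  simp only [Fin.mk.injEq] at this
  omega

lemma cycle_getVert_ne_two {Vt : Type*} {G : SimpleGraph Vt} {u : Vt} {w : G.Walk u u}
    (hw : w.IsCycle) {j : ℕ} (hj : j + 2 ≤ w.length) :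
    w.getVert j ≠ w.getVert (j+2) := by
  have h3 := hw.three_le_length
  cases j with
  | zero =>
    intro hcon
    simp only [SimpleGraph.Walk.getVert_zero, zero_add] at hcon
    have h := cycle_getVert_ne hw (i := 2) (j := w.length) (by omega) (by omega) (le_refl _)
    apply h
    rw [SimpleGraph.Walk.getVert_length, ← hcon]
  | succ m =>
    exact cycle_getVert_ne hw (by omega) (by omega) hj

lemma telescope {G : Type*} [Group G] (f : ℕ → G) (k : ℕ) :
    (List.ofFn (fun j : Fin k => (f (j:ℕ))⁻¹ * f ((j:ℕ)+1))).prod = (f 0)⁻¹ * f k := by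
  induction k with
  | zero => simp
  | succ n ih =>
    rw [List.ofFn_succ']
    rw [List.concat_eq_append, List.prod_append]
    simp only [List.prod_cons, List.prod_nil, mul_one]
    have : (List.ofFn fun i : Fin n => (f ((i.castSucc : ℕ)))⁻¹ * f ((i.castSucc : ℕ)+1)).prod
        = (f 0)⁻¹ * f n := by
      simpa using ih
    rw [this]
    simp [Fin.val_last, mul_assoc]

set_option maxHeartbeats 1000000 in
/-- From a short cycle in the Cayley graph we extract a nonempty reduced word whose product is 1. -/
theorem cycle_gives_word {𝒢 : Type*} [Group 𝒢] (S : Set 𝒢) {M : ℕ} (ψ : Fin M → 𝒢)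
    (hS : S ⊆ Set.range ψ) {u : 𝒢} {w : (cayleyGraph S).Walk u u} (hw : w.IsCycle) :
    ∃ L : List (Fin M × Bool), L ≠ [] ∧ L.length = w.length ∧
      List.Chain' (fun x y => ¬(x.1 = y.1 ∧ x.2 = !y.2)) L ∧
      (L.map fun x => bif x.2 then ψ x.1 else (ψ x.1)⁻¹).prod = 1 := by
  have h3 := hw.three_le_length
  have hadj : ∀ j : Fin w.length, ∃ (i : Fin M) (b : Bool),
      (w.getVert (j:ℕ))⁻¹ * w.getVert ((j:ℕ)+1) = (bif b then ψ i else (ψ i)⁻¹) := by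
    intro j
    have hadj := w.adj_getVert_succ j.2
    obtain ⟨-, s, hsS, hcase⟩ := hadj
    obtain ⟨i, rfl⟩ := hS hsS
    rcases hcase with h | h
    · exact ⟨i, true, by rw [← h]; simp⟩
    · exact ⟨i, false, by rw [← h]; simp⟩
  choose ci cb hc using hadj
  refine ⟨List.ofFn (fun j => (ci j, cb j)), ?_, ?_, ?_, ?_⟩
  · have hlen' : (List.ofFn (fun j => (ci j, cb j))).length = w.length := by simp
    intro hcon
    rw [hcon] at hlen'
    simp at hlen'
    omega
  · simp
  · have key : ∀ (j1 j2 : Fin w.length), (j2:ℕ) = (j1:ℕ) + 1 → ci j1 = ci j2 →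
        cb j1 = !cb j2 → False := by
      intro j1 j2 hsucc hi hb
      have e1 := hc j1
      have e2 := hc j2
      rw [hsucc] at e2
      have hflip : (bif cb j2 then ψ (ci j2) else (ψ (ci j2))⁻¹)
          = (bif cb j1 then ψ (ci j1) else (ψ (ci j1))⁻¹)⁻¹ := by
        rw [hb, hi]
        cases cb j2 <;> simp
      rw [hflip, ← e1, mul_inv_rev, inv_inv] at e2
      have hj2 : (j1:ℕ) + 2 ≤ w.length := by
        have := j2.2
        omega
      exact cycle_getVert_ne_two hw hj2 (mul_left_cancel e2).symm
    unfold List.Chain'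
    rw [List.isChain_iff_getElem]
    intro j hj
    simp only [List.length_ofFn] at hj
    simp only [List.getElem_ofFn]
    intro ⟨hieq, hbeq⟩
    exact key _ _ (by simp) hieq hbeq
  · have hmap : (List.ofFn (fun j => (ci j, cb j))).map
        (fun x => bif x.2 then ψ x.1 else (ψ x.1)⁻¹)
        = List.ofFn (fun j : Fin w.length => (w.getVert (j:ℕ))⁻¹ * w.getVert ((j:ℕ)+1)) := by
      rw [List.map_ofFn]
      congr 1
      funext j
      exact (hc j).symm
    rw [hmap]
    have := telescope (fun n => w.getVert n) w.length
    simpa [SimpleGraph.Walk.getVert_zero, SimpleGraph.Walk.getVert_length] using this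

end HighGirthCayley

/-- There is an absolute constant `C` such that for all integers `l ≥ 1` and
`g ≥ 3` there is a finite group `𝒢` with a generating set `S` of size at least `l`, with
`|𝒢| ≤ (C·(l+1))^(C·g)`, whose Cayley graph has girth at least `g`. -/
theorem exists_high_girth_cayley_graph :
    ∃ C : ℝ, 0 < C ∧
      ∀ l g : ℕ, 1 ≤ l → 3 ≤ g →
        ∃ (𝒢 : Type) (_ : Group 𝒢) (_ : Fintype 𝒢) (S : Set 𝒢),
          Subgroup.closure S = ⊤ ∧
          (l : ℕ) ≤ S.ncard ∧
          (Nat.card 𝒢 : ℝ) ≤ (C * ((l : ℝ) + 1)) ^ (C * (g : ℝ)) ∧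
          ((g : ℕ∞) ≤ (cayleyGraph S).egirth) := by
  classical
  refine ⟨64, by norm_num, ?_⟩
  intro l g hl hg
  set M : ℕ := l + 2 with hM
  set p : ℕ := (16*M^2)^g + 1 with hp
  haveI : NeZero p := ⟨by positivity⟩
  -- basic numeric facts
  have hMpos : 1 ≤ M := by omega
  have hbase1 : 1 < 16*M^2 := by nlinarith
  have hp4 : 4*M < p := by
    have h1 : 16*M^2 ≤ (16*M^2)^g := Nat.le_self_pow (by omega) _
    nlinarith
  let ψ : Fin M → Matrix.SpecialLinearGroup (Fin 2) (ZMod p) :=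
    fun i => Matrix.SpecialLinearGroup.map (Int.castRingHom (ZMod p)) (HighGirthCayley.gen (i:ℕ))
  have hψinj : Function.Injective ψ := by
    intro i j hij
    have h00 : (ψ i : Matrix (Fin 2) (Fin 2) (ZMod p)) 0 0
        = (ψ j : Matrix (Fin 2) (Fin 2) (ZMod p)) 0 0 := by rw [hij]
    simp only [ψ, Matrix.SpecialLinearGroup.map, HighGirthCayley.gen_entry,
      MonoidHom.coe_mk, OneHom.coe_mk, Matrix.map_apply] at h00
    have h00' : ((1 + 4*((i:ℕ):ℤ) : ℤ) : ZMod p) = ((1 + 4*((j:ℕ):ℤ) : ℤ) : ZMod p) := by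
      exact h00
    have hd : (p:ℤ) ∣ ((1 + 4*((i:ℕ):ℤ)) - (1 + 4*((j:ℕ):ℤ))) := by
      rw [← ZMod.intCast_zmod_eq_zero_iff_dvd]
      push_cast
      rw [sub_eq_zero]
      exact_mod_cast h00'
    have heq0 : ((1 + 4*((i:ℕ):ℤ)) - (1 + 4*((j:ℕ):ℤ))) = 0 := by
      by_contra hne
      have hle := Int.le_of_dvd (abs_pos.mpr hne) ((dvd_abs _ _).mpr hd)
      have hi2 := i.2
      have hj2 := j.2
      rcases abs_cases ((1 + 4*((i:ℕ):ℤ)) - (1 + 4*((j:ℕ):ℤ))) with ⟨he, -⟩ | ⟨he, -⟩ <;> omega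
    have : (i:ℕ) = (j:ℕ) := by omega
    exact Fin.ext this
  set S₀ : Set (Matrix.SpecialLinearGroup (Fin 2) (ZMod p)) := Set.range ψ with hS₀
  set H : Subgroup (Matrix.SpecialLinearGroup (Fin 2) (ZMod p)) := Subgroup.closure S₀ with hH
  haveI : Fintype ↥H := Fintype.ofFinite _
  set S : Set ↥H := (Subtype.val : ↥H → _) ⁻¹' S₀ with hS
  refine ⟨↥H, inferInstance, inferInstance, S, ?_, ?_, ?_, ?_⟩
  · exact Subgroup.closure_closure_coe_preimage
  · -- cardinality of S
    have h1 : (Subtype.val '' S) = S₀ := by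
      apply Set.image_preimage_eq_of_subset
      rw [Subtype.range_coe]
      exact Subgroup.subset_closure
    have h2 : S.ncard = S₀.ncard := by
      rw [← h1, Set.ncard_image_of_injective _ Subtype.val_injective]
    have h3 : S₀.ncard = M := by
      rw [hS₀, ← Nat.card_coe_set_eq, Nat.card_range_of_injective hψinj,
        Nat.card_eq_fintype_card, Fintype.card_fin]
    omega
  · -- cardinality of the group
    have hc1 : Nat.card ↥H ≤ Nat.card (Matrix.SpecialLinearGroup (Fin 2) (ZMod p)) :=
      Nat.card_le_card_of_injective _ Subtype.val_injective
    have hc2 : Nat.card (Matrix.SpecialLinearGroup (Fin 2) (ZMod p))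
        ≤ Nat.card (Matrix (Fin 2) (Fin 2) (ZMod p)) :=
      Nat.card_le_card_of_injective _ Subtype.val_injective
    have hc3 : Nat.card (Matrix (Fin 2) (Fin 2) (ZMod p)) = p^4 := by
      have e : Matrix (Fin 2) (Fin 2) (ZMod p) ≃ (Fin 2 → Fin 2 → ZMod p) :=
        Equiv.refl _
      rw [Nat.card_congr e, Nat.card_fun, Nat.card_fun, Nat.card_zmod,
        Nat.card_eq_fintype_card, Fintype.card_fin]
      ring
    have hnat : Nat.card ↥H ≤ (64*(l+1))^(64*g) := by
      have s1 : p ≤ 2*(16*M^2)^g := by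
        have : 1 ≤ (16*M^2)^g := Nat.one_le_pow _ _ (by omega)
        omega
      have s2 : 16*M^2 ≤ (64*(l+1))^2 := by nlinarith
      have s3 : (16*M^2)^g ≤ ((64*(l+1))^2)^g := Nat.pow_le_pow_left s2 g
      have s4 : p^4 ≤ (2*((64*(l+1))^2)^g)^4 := by
        apply Nat.pow_le_pow_left
        omega
      have s5 : (2*((64*(l+1))^2)^g)^4 = 2^4 * (64*(l+1))^(8*g) := by
        rw [mul_pow, ← pow_mul, ← pow_mul]
        ring_nf
      have s6 : 2^4 * (64*(l+1))^(8*g) ≤ (64*(l+1))^(8*g+1) := by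
        rw [pow_succ]
        have h24 : (2:ℕ)^4 ≤ 64*(l+1) := by nlinarith
        calc 2^4 * (64*(l+1))^(8*g) ≤ (64*(l+1)) * (64*(l+1))^(8*g) :=
              Nat.mul_le_mul_right _ h24
          _ = (64*(l+1))^(8*g) * (64*(l+1)) := Nat.mul_comm _ _
      have s7 : (64*(l+1))^(8*g+1) ≤ (64*(l+1))^(64*g) :=
        Nat.pow_le_pow_right (by omega) (by omega)
      calc Nat.card ↥H ≤ p^4 := le_trans hc1 (le_trans hc2 (le_of_eq hc3))
        _ ≤ (2*((64*(l+1))^2)^g)^4 := s4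
        _ = 2^4 * (64*(l+1))^(8*g) := s5
        _ ≤ (64*(l+1))^(8*g+1) := s6
        _ ≤ (64*(l+1))^(64*g) := s7
    have hrw : ((64:ℝ) * ((l:ℝ) + 1)) ^ ((64:ℝ) * (g:ℝ))
        = (((64*(l+1))^(64*g) : ℕ) : ℝ) := by
      have he : (64:ℝ) * (g:ℝ) = ((64*g : ℕ) : ℝ) := by push_cast; ring
      rw [he, Real.rpow_natCast]
      push_cast
      ring
    rw [hrw]
    exact_mod_cast hnat
  · -- girth
    rw [SimpleGraph.le_egirth]
    intro a w hw
    by_contra hcon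
    push_neg at hcon
    have hlen : w.length < g := by exact_mod_cast hcon
    have h3 := hw.three_le_length
    let ψ' : Fin M → ↥H := fun i => ⟨ψ i, Subgroup.subset_closure (Set.mem_range_self i)⟩
    have hS' : S ⊆ Set.range ψ' := by
      intro x hx
      obtain ⟨i, hi⟩ := hx
      exact ⟨i, Subtype.ext hi⟩
    obtain ⟨L, hLne, hLlen, hLchain, hLprod⟩ := HighGirthCayley.cycle_gives_word S ψ' hS' hw
    have hpZ : ((16*(M:ℤ)^2)^(g-1) + 1 : ℤ) < (p:ℤ) := by
      have h1 : (16*M^2)^(g-1) < (16*M^2)^g := Nat.pow_lt_pow_right hbase1 (by omega)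
      have h2 : ((16*M^2 : ℕ):ℤ)^(g-1) < ((16*M^2 : ℕ):ℤ)^g := by exact_mod_cast h1
      push_cast at h2 ⊢
      have h3 : (((16*M^2)^g : ℕ) : ℤ) = (16*(M:ℤ)^2)^g := by push_cast; ring
      omega
    apply HighGirthCayley.no_short_relation M (by omega) g p hpZ L hLne hLchain (by omega)
    have := congrArg H.subtype hLprod
    rw [map_list_prod, List.map_map, map_one] at this
    rw [← this]
    congr 1
    apply List.map_congr_left
    intro x _
    cases hx : x.2 <;> simp [hx, ψ', ψ, Function.comp]
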